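/- Let f1, f2 : (0,R) → ℝ be analytic, convex, both monotonically increasing (or both decreasing), each satisfying x*γ(f_i, x) ≤ ᾱ_i for all x in a given closed subinterval. Then for g := f1 + f2, wherever g' ≠ 0, x*γ(g, x) ≤ max{ᾱ1, ᾱ2} on that subinterval. -/

import Mathlib

/-- Smale's gamma invariant:
`γ(f,x) = sup_{k ≥ 2} |f⁽ᵏ⁾(x) / (k! f'(x))|^(1/(k-1))`. -/
noncomputable def smaleGamma (f : ℝ → ℝ) (x : ℝ) : ℝ :=
  sSup {y : ℝ | ∃ k : ℕ, 2 ≤ k ∧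
    y = |iteratedDeriv k f x / ((Nat.factorial k : ℝ) * deriv f x)| ^ ((1 : ℝ) / ((k : ℝ) - 1))}

open Set Filter Topology
open scoped NNReal

private lemma itd_coeff {f : ℝ → ℝ} {p : FormalMultilinearSeries ℝ ℝ ℝ} {x : ℝ}
    (hf : HasFPowerSeriesAt f p x) (k : ℕ) :
    iteratedDeriv k f x = (Nat.factorial k : ℝ) * p.coeff k := by
  obtain ⟨r, hr⟩ := hf
  have h := hr.factorial_smul (y := (1 : ℝ)) k
  rw [iteratedDeriv_eq_iteratedFDeriv, ← h, FormalMultilinearSeries.coeff, nsmul_eq_mul]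
  rfl

private lemma epos {k : ℕ} (hk : 2 ≤ k) : 0 < (k : ℝ) - 1 := by
  have : (2 : ℝ) ≤ (k : ℝ) := by exact_mod_cast hk
  linarith

private lemma bddAbove_gset {f : ℝ → ℝ} {x : ℝ} (hf : AnalyticAt ℝ f x) :
    BddAbove {y : ℝ | ∃ k : ℕ, 2 ≤ k ∧
      y = |iteratedDeriv k f x / ((Nat.factorial k : ℝ) * deriv f x)| ^
        ((1 : ℝ) / ((k : ℝ) - 1))} := by
  obtain ⟨p, hp⟩ := hf
  by_cases hd : deriv f x = 0
  · refine ⟨0, ?_⟩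
    rintro y ⟨k, hk, rfl⟩
    have he : (1 : ℝ) / ((k : ℝ) - 1) ≠ 0 := by
      have := epos hk; positivity
    rw [hd, mul_zero, div_zero, abs_zero, Real.zero_rpow he]
  · obtain ⟨r, hr0, hrlt⟩ := ENNReal.lt_iff_exists_nnreal_btwn.mp hp.radius_pos
    have hr0' : (0 : ℝ≥0) < r := by exact_mod_cast hr0
    obtain ⟨C, hC0, hC⟩ := p.norm_le_div_pow_of_pos_of_lt_radius hr0' hrlt
    set d : ℝ := |deriv f x| with hdd
    have hdpos : 0 < d := abs_pos.mpr hd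
    set D : ℝ := max 1 (C / d) with hD
    set s : ℝ := max 1 (1 / (r : ℝ)) with hs
    have hD1 : (1 : ℝ) ≤ D := le_max_left _ _
    have hs1 : (1 : ℝ) ≤ s := le_max_left _ _
    have hD0 : (0 : ℝ) ≤ D := by linarith
    have hs0 : (0 : ℝ) ≤ s := by linarith
    refine ⟨D * s ^ 2, ?_⟩
    rintro y ⟨k, hk, rfl⟩
    have hkf : ((Nat.factorial k : ℝ)) ≠ 0 := by positivity
    have he := epos hk
    have hbase : |iteratedDeriv k f x / ((Nat.factorial k : ℝ) * deriv f x)| ≤ D * s ^ k := by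
      rw [itd_coeff hp k]
      have h1 : (Nat.factorial k : ℝ) * p.coeff k / ((Nat.factorial k : ℝ) * deriv f x)
          = p.coeff k / deriv f x := by
        field_simp
      rw [h1, abs_div]
      have h2 : |p.coeff k| ≤ C / (r : ℝ) ^ k := by
        have := hC k
        rwa [FormalMultilinearSeries.norm_apply_eq_norm_coef, Real.norm_eq_abs] at this
      have hrr : (0 : ℝ) < (r : ℝ) := by exact_mod_cast hr0'
      calc |p.coeff k| / d ≤ (C / (r : ℝ) ^ k) / d := by
            gcongr
        _ = (C / d) * (1 / (r : ℝ)) ^ k := by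
            rw [div_pow, one_pow]; ring
        _ ≤ D * s ^ k := by
            apply mul_le_mul (le_max_right _ _) (pow_le_pow_left₀ (by positivity) (le_max_right _ _) k)
              (by positivity) hD0
    have hynn : (0 : ℝ) ≤ |iteratedDeriv k f x / ((Nat.factorial k : ℝ) * deriv f x)| :=
      abs_nonneg _
    have hee : (0 : ℝ) ≤ 1 / ((k : ℝ) - 1) := by positivity
    calc |iteratedDeriv k f x / ((Nat.factorial k : ℝ) * deriv f x)| ^ ((1:ℝ) / ((k:ℝ) - 1))
        ≤ (D * s ^ k) ^ ((1:ℝ) / ((k:ℝ) - 1)) := Real.rpow_le_rpow hynn hbase hee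
      _ = D ^ ((1:ℝ) / ((k:ℝ) - 1)) * (s ^ k) ^ ((1:ℝ) / ((k:ℝ) - 1)) :=
          Real.mul_rpow hD0 (by positivity)
      _ ≤ D ^ (1:ℝ) * s ^ (2:ℝ) := by
          apply mul_le_mul
          · apply Real.rpow_le_rpow_of_exponent_le hD1
            rw [div_le_one he]
            have : (2 : ℝ) ≤ (k : ℝ) := by exact_mod_cast hk
            linarith
          · rw [← Real.rpow_natCast s k, ← Real.rpow_mul hs0]
            apply Real.rpow_le_rpow_of_exponent_le hs1
            rw [mul_one_div, div_le_iff₀ he]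
            have : (2 : ℝ) ≤ (k : ℝ) := by exact_mod_cast hk
            linarith
          · positivity
          · positivity
      _ = D * s ^ 2 := by rw [Real.rpow_one, Real.rpow_two]

private lemma elem_le_gamma {f : ℝ → ℝ} {x : ℝ} (hf : AnalyticAt ℝ f x) {k : ℕ} (hk : 2 ≤ k) :
    |iteratedDeriv k f x / ((Nat.factorial k : ℝ) * deriv f x)| ^ ((1 : ℝ) / ((k : ℝ) - 1))
      ≤ smaleGamma f x :=
  le_csSup (bddAbove_gset hf) ⟨k, hk, rfl⟩

private lemma gamma_nonneg {f : ℝ → ℝ} {x : ℝ} (hf : AnalyticAt ℝ f x) :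
    0 ≤ smaleGamma f x :=
  le_trans (Real.rpow_nonneg (abs_nonneg _) _) (elem_le_gamma hf (le_refl 2))

private lemma deriv_sign_nonneg {R : ℝ} {f : ℝ → ℝ} (hc : ConvexOn ℝ (Set.Ioo 0 R) f)
    (hm : MonotoneOn f (Set.Ioo 0 R)) {x : ℝ} (hx : x ∈ Set.Ioo 0 R)
    (hd : DifferentiableAt ℝ f x) : 0 ≤ deriv f x := by
  have hs : x / 2 ∈ Set.Ioo 0 R := ⟨by linarith [hx.1], by linarith [hx.1, hx.2]⟩
  have h := hc.slope_le_deriv hs hx (by linarith [hx.1]) hd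
  refine le_trans ?_ h
  rw [slope_def_field]
  apply div_nonneg (sub_nonneg.2 (hm hs hx (by linarith [hx.1]))) (by linarith [hx.1])

private lemma deriv_sign_nonpos {R : ℝ} {f : ℝ → ℝ} (hc : ConvexOn ℝ (Set.Ioo 0 R) f)
    (hm : AntitoneOn f (Set.Ioo 0 R)) {x : ℝ} (hx : x ∈ Set.Ioo 0 R)
    (hd : DifferentiableAt ℝ f x) : deriv f x ≤ 0 := by
  have hu : (x + R) / 2 ∈ Set.Ioo 0 R := ⟨by linarith [hx.1, hx.2], by linarith [hx.2]⟩
  have h := hc.deriv_le_slope hx hu (by linarith [hx.2]) hd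
  refine h.trans ?_
  rw [slope_def_field]
  apply div_nonpos_of_nonpos_of_nonneg
  · exact sub_nonpos.2 (hm hx hu (by linarith [hx.2]))
  · linarith [hx.2]

private lemma itd_zero {R : ℝ} {f : ℝ → ℝ} (hf : AnalyticOnNhd ℝ f (Set.Ioo 0 R))
    (hc : ConvexOn ℝ (Set.Ioo 0 R) f)
    (hm : MonotoneOn f (Set.Ioo 0 R) ∨ AntitoneOn f (Set.Ioo 0 R))
    {x : ℝ} (hx : x ∈ Set.Ioo 0 R) (hd : deriv f x = 0) {k : ℕ} (hk : 1 ≤ k) :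
    iteratedDeriv k f x = 0 := by
  have hdiff : ∀ y ∈ Set.Ioo 0 R, DifferentiableAt ℝ f y := fun y hy => (hf y hy).differentiableAt
  have hmd : MonotoneOn (deriv f) (Set.Ioo 0 R) := hc.monotoneOn_deriv hdiff
  have hfreq : ∃ᶠ z in 𝓝[≠] x, deriv f z = 0 := by
    rcases hm with hm | hm
    · have hz : ∀ z ∈ Set.Ioo 0 x, deriv f z = 0 := by
        intro z hz
        have hzR : z ∈ Set.Ioo 0 R := ⟨hz.1, hz.2.trans hx.2⟩
        have h1 : deriv f z ≤ 0 := hd ▸ hmd hzR hx hz.2.le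
        have h2 : 0 ≤ deriv f z := deriv_sign_nonneg hc hm hzR (hdiff z hzR)
        linarith
      have hev : ∀ᶠ z in 𝓝[<] x, deriv f z = 0 :=
        eventually_of_mem (Ioo_mem_nhdsLT_of_mem ⟨hx.1, le_refl x⟩) hz
      exact hev.frequently.filter_mono (nhdsWithin_mono x fun y hy => ne_of_lt hy)
    · have hz : ∀ z ∈ Set.Ioo x R, deriv f z = 0 := by
        intro z hz
        have hzR : z ∈ Set.Ioo 0 R := ⟨hx.1.trans hz.1, hz.2⟩
        have h1 : 0 ≤ deriv f z := hd ▸ hmd hx hzR hz.1.le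
        have h2 : deriv f z ≤ 0 := deriv_sign_nonpos hc hm hzR (hdiff z hzR)
        linarith
      have hev : ∀ᶠ z in 𝓝[>] x, deriv f z = 0 :=
        eventually_of_mem (Ioo_mem_nhdsGT_of_mem ⟨le_refl x, hx.2⟩) hz
      exact hev.frequently.filter_mono (nhdsWithin_mono x fun y hy => ne_of_gt hy)
  have hA : AnalyticAt ℝ (deriv f) x := hf.deriv x hx
  have hev : ∀ᶠ z in 𝓝 x, deriv f z = 0 := hA.frequently_zero_iff_eventually_zero.mp hfreq
  obtain ⟨m, rfl⟩ := Nat.exists_eq_add_of_le hk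
  rw [add_comm, iteratedDeriv_succ']
  have h0 : iteratedDeriv m (deriv f) x = iteratedDeriv m (fun _ => (0 : ℝ)) x :=
    Filter.EventuallyEq.iteratedDeriv_eq m hev
  rw [h0, iteratedDeriv_eq_iteratedFDeriv, iteratedFDeriv_zero_fun]
  simp

theorem stmt_19 (R : ℝ) (hR : 0 < R) (f1 f2 : ℝ → ℝ)
    (hf1 : AnalyticOnNhd ℝ f1 (Set.Ioo 0 R)) (hf2 : AnalyticOnNhd ℝ f2 (Set.Ioo 0 R))
    (hc1 : ConvexOn ℝ (Set.Ioo 0 R) f1) (hc2 : ConvexOn ℝ (Set.Ioo 0 R) f2)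
    (hmono : (MonotoneOn f1 (Set.Ioo 0 R) ∧ MonotoneOn f2 (Set.Ioo 0 R)) ∨
             (AntitoneOn f1 (Set.Ioo 0 R) ∧ AntitoneOn f2 (Set.Ioo 0 R)))
    (a b : ℝ) (hab : Set.Icc a b ⊆ Set.Ioo 0 R)
    (α1 α2 : ℝ)
    (hγ1 : ∀ x ∈ Set.Icc a b, x * smaleGamma f1 x ≤ α1)
    (hγ2 : ∀ x ∈ Set.Icc a b, x * smaleGamma f2 x ≤ α2) :
    ∀ x ∈ Set.Icc a b, deriv (fun y => f1 y + f2 y) x ≠ 0 →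
      x * smaleGamma (fun y => f1 y + f2 y) x ≤ max α1 α2 := by
  intro x hx hgx
  have hx' : x ∈ Set.Ioo 0 R := hab hx
  have hx0 : 0 < x := hx'.1
  have ha1 : AnalyticAt ℝ f1 x := hf1 x hx'
  have ha2 : AnalyticAt ℝ f2 x := hf2 x hx'
  obtain ⟨p, hp1⟩ := id ha1
  obtain ⟨q, hp2⟩ := id ha2
  have hpg : HasFPowerSeriesAt (fun y => f1 y + f2 y) (p + q) x := hp1.add hp2
  have hd1 : DifferentiableAt ℝ f1 x := ha1.differentiableAt
  have hd2 : DifferentiableAt ℝ f2 x := ha2.differentiableAt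
  have hdg : deriv (fun y => f1 y + f2 y) x = deriv f1 x + deriv f2 x := deriv_add hd1 hd2
  -- sign facts
  have hsign : (0 ≤ deriv f1 x ∧ 0 ≤ deriv f2 x) ∨ (deriv f1 x ≤ 0 ∧ deriv f2 x ≤ 0) := by
    rcases hmono with ⟨h1, h2⟩ | ⟨h1, h2⟩
    · exact Or.inl ⟨deriv_sign_nonneg hc1 h1 hx' hd1, deriv_sign_nonneg hc2 h2 hx' hd2⟩
    · exact Or.inr ⟨deriv_sign_nonpos hc1 h1 hx' hd1, deriv_sign_nonpos hc2 h2 hx' hd2⟩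
  have habs : |deriv (fun y => f1 y + f2 y) x| = |deriv f1 x| + |deriv f2 x| := by
    rw [hdg]
    rcases hsign with ⟨h1, h2⟩ | ⟨h1, h2⟩
    · rw [abs_of_nonneg h1, abs_of_nonneg h2, abs_of_nonneg (by linarith)]
    · rw [abs_of_nonpos h1, abs_of_nonpos h2, abs_of_nonpos (by linarith)]; ring
  -- nonnegativity of max
  have hα1 : 0 ≤ α1 := le_trans (mul_nonneg hx0.le (gamma_nonneg ha1)) (hγ1 x hx)
  have hmax0 : 0 ≤ max α1 α2 := le_trans hα1 (le_max_left _ _)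
  set μ : ℝ := max α1 α2 / x with hμ
  have hμ0 : 0 ≤ μ := by positivity
  -- reduce to bounding the sup
  rw [mul_comm, ← le_div_iff₀ hx0]
  apply Real.sSup_le _ (by positivity)
  rintro y ⟨k, hk, rfl⟩
  have he := epos hk
  have hkf : (0:ℝ) < (Nat.factorial k : ℝ) := by positivity
  -- per-function bound : |iteratedDeriv k fi x| ≤ k! * |deriv fi x| * μ ^ ((k:ℝ)-1)
  have key : ∀ (f : ℝ → ℝ) (α : ℝ), AnalyticAt ℝ f x → ConvexOn ℝ (Set.Ioo 0 R) f →
      (MonotoneOn f (Set.Ioo 0 R) ∨ AntitoneOn f (Set.Ioo 0 R)) →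
      AnalyticOnNhd ℝ f (Set.Ioo 0 R) →
      (x * smaleGamma f x ≤ α) → α ≤ max α1 α2 →
      |iteratedDeriv k f x| ≤ (Nat.factorial k : ℝ) * |deriv f x| * μ ^ ((k:ℝ) - 1) := by
    intro f α haf hcf hmf hof hγ hαle
    by_cases hdf : deriv f x = 0
    · rw [itd_zero hof hcf hmf hx' hdf (by omega)]
      simp [abs_nonneg]
      positivity
    · have helem := elem_le_gamma haf hk
      have h1 : x * (|iteratedDeriv k f x / ((Nat.factorial k : ℝ) * deriv f x)| ^
          ((1:ℝ)/((k:ℝ)-1))) ≤ α :=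
        le_trans (mul_le_mul_of_nonneg_left helem hx0.le) hγ
      have h2 : |iteratedDeriv k f x / ((Nat.factorial k : ℝ) * deriv f x)| ^
          ((1:ℝ)/((k:ℝ)-1)) ≤ μ := by
        rw [hμ]
        rw [le_div_iff₀ hx0, mul_comm]
        exact le_trans h1 hαle
      have h3 : |iteratedDeriv k f x / ((Nat.factorial k : ℝ) * deriv f x)| ≤
          μ ^ ((k:ℝ) - 1) := by
        have h4 := Real.rpow_le_rpow (Real.rpow_nonneg (abs_nonneg _) _) h2 he.le
        rwa [← Real.rpow_mul (abs_nonneg _), one_div, inv_mul_cancel₀ (ne_of_gt he),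
          Real.rpow_one] at h4
      have h5 : |iteratedDeriv k f x / ((Nat.factorial k : ℝ) * deriv f x)| =
          |iteratedDeriv k f x| / ((Nat.factorial k : ℝ) * |deriv f x|) := by
        rw [abs_div, abs_mul, abs_of_pos hkf]
      rw [h5] at h3
      have hden : 0 < (Nat.factorial k : ℝ) * |deriv f x| :=
        mul_pos hkf (abs_pos.mpr hdf)
      calc |iteratedDeriv k f x|
          = (|iteratedDeriv k f x| / ((Nat.factorial k : ℝ) * |deriv f x|)) *
            ((Nat.factorial k : ℝ) * |deriv f x|) := by field_simp
        _ ≤ μ ^ ((k:ℝ) - 1) * ((Nat.factorial k : ℝ) * |deriv f x|) :=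
            mul_le_mul_of_nonneg_right h3 hden.le
        _ = (Nat.factorial k : ℝ) * |deriv f x| * μ ^ ((k:ℝ) - 1) := by ring
  have hm1 : MonotoneOn f1 (Set.Ioo 0 R) ∨ AntitoneOn f1 (Set.Ioo 0 R) := by
    rcases hmono with ⟨h1, _⟩ | ⟨h1, _⟩
    exacts [Or.inl h1, Or.inr h1]
  have hm2 : MonotoneOn f2 (Set.Ioo 0 R) ∨ AntitoneOn f2 (Set.Ioo 0 R) := by
    rcases hmono with ⟨_, h2⟩ | ⟨_, h2⟩
    exacts [Or.inl h2, Or.inr h2]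
  have k1 := key f1 α1 ha1 hc1 hm1 hf1 (hγ1 x hx) (le_max_left _ _)
  have k2 := key f2 α2 ha2 hc2 hm2 hf2 (hγ2 x hx) (le_max_right _ _)
  -- sum of iterated derivatives
  have hsum : iteratedDeriv k (fun y => f1 y + f2 y) x =
      iteratedDeriv k f1 x + iteratedDeriv k f2 x := by
    rw [itd_coeff hpg k, itd_coeff hp1 k, itd_coeff hp2 k]
    have : (p + q).coeff k = p.coeff k + q.coeff k := rfl
    rw [this]; ring
  have hnum : |iteratedDeriv k (fun y => f1 y + f2 y) x| ≤
      (Nat.factorial k : ℝ) * |deriv (fun y => f1 y + f2 y) x| * μ ^ ((k:ℝ) - 1) := by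
    rw [hsum, habs]
    calc |iteratedDeriv k f1 x + iteratedDeriv k f2 x|
        ≤ |iteratedDeriv k f1 x| + |iteratedDeriv k f2 x| := abs_add_le _ _
      _ ≤ (Nat.factorial k : ℝ) * |deriv f1 x| * μ ^ ((k:ℝ) - 1) +
          (Nat.factorial k : ℝ) * |deriv f2 x| * μ ^ ((k:ℝ) - 1) := add_le_add k1 k2
      _ = (Nat.factorial k : ℝ) * (|deriv f1 x| + |deriv f2 x|) * μ ^ ((k:ℝ) - 1) := by ring
  have hdgne : |deriv (fun y => f1 y + f2 y) x| ≠ 0 := fun h => hgx (abs_eq_zero.mp h)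
  have hdgpos : 0 < |deriv (fun y => f1 y + f2 y) x| := lt_of_le_of_ne (abs_nonneg _) (Ne.symm hdgne)
  have hratio : |iteratedDeriv k (fun y => f1 y + f2 y) x /
      ((Nat.factorial k : ℝ) * deriv (fun y => f1 y + f2 y) x)| ≤ μ ^ ((k:ℝ) - 1) := by
    rw [abs_div, abs_mul, abs_of_pos hkf, div_le_iff₀ (by positivity)]
    calc |iteratedDeriv k (fun y => f1 y + f2 y) x|
        ≤ (Nat.factorial k : ℝ) * |deriv (fun y => f1 y + f2 y) x| * μ ^ ((k:ℝ) - 1) := hnum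
      _ = μ ^ ((k:ℝ) - 1) * ((Nat.factorial k : ℝ) * |deriv (fun y => f1 y + f2 y) x|) := by ring
  calc |iteratedDeriv k (fun y => f1 y + f2 y) x /
        ((Nat.factorial k : ℝ) * deriv (fun y => f1 y + f2 y) x)| ^ ((1:ℝ)/((k:ℝ)-1))
      ≤ (μ ^ ((k:ℝ) - 1)) ^ ((1:ℝ)/((k:ℝ)-1)) :=
        Real.rpow_le_rpow (abs_nonneg _) hratio (by positivity)
    _ = μ := by
        rw [← Real.rpow_mul hμ0, mul_one_div, div_self (ne_of_gt he), Real.rpow_one]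
    _ = max α1 α2 / x := hμ
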